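/- (Extended convexity of the quantum Fisher information.) Let I be a finite index set, and for each i ∈ I let θ ↦ ρ_i(θ) be a family of positive-definite Hermitian d×d matrices with trace 1, differentiable at θ₀, and θ ↦ λ_i(θ) strictly positive differentiable weights with Σ_i λ_i(θ) = 1. Let ρ(θ) := Σ_i λ_i(θ) ρ_i(θ). Suppose L and L_i are Hermitian matrices satisfying the symmetric-logarithmic-derivative equations ρ′(θ₀) = (ρ(θ₀)L + Lρ(θ₀))/2 and ρ_i′(θ₀) = (ρ_i(θ₀)L_i + L_iρ_i(θ₀))/2. Then tr(ρ(θ₀) L²) ≤ Σ_i λ_i(θ₀) tr(ρ_i(θ₀) L_i²) + Σ_i (λ_i′(θ₀))² / λ_i(θ₀). -/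

import Mathlib

open Matrix
open scoped ComplexOrder

private lemma trace_re_nonneg_of_posSemidef {n : Type*} [Fintype n] [DecidableEq n]
    {M : Matrix n n ℂ} (h : M.PosSemidef) : 0 ≤ M.trace.re := by
  exact (Complex.nonneg_iff.mp h.trace_nonneg).1

private lemma traceRe_sq_nonneg {n : Type*} [Fintype n] [DecidableEq n]
    {ρ A : Matrix n n ℂ} (hρ : ρ.PosSemidef) (hA : A.IsHermitian) :
    0 ≤ ((ρ * A * A).trace).re := by
  have h := trace_re_nonneg_of_posSemidef (hρ.conjTranspose_mul_mul_same A)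
  rwa [hA.eq, Matrix.trace_mul_cycle, Matrix.trace_mul_cycle] at h

private lemma traceRe_comm {n : Type*} [Fintype n] {ρ A B : Matrix n n ℂ}
    (hρ : ρ.IsHermitian) (hA : A.IsHermitian) (hB : B.IsHermitian) :
    ((ρ * A * B).trace).re = ((ρ * B * A).trace).re := by
  have h : (ρ * B * A).trace = star ((ρ * A * B).trace) := by
    rw [← Matrix.trace_conjTranspose, Matrix.conjTranspose_mul, Matrix.conjTranspose_mul,
      hρ.eq, hA.eq, hB.eq, Matrix.mul_assoc, Matrix.trace_mul_comm, Matrix.mul_assoc]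
  rw [h, Complex.star_def, Complex.conj_re]

private lemma traceRe_cauchy_schwarz {n : Type*} [Fintype n] [DecidableEq n]
    {ρ A B : Matrix n n ℂ} (hρ : ρ.PosSemidef) (hA : A.IsHermitian) (hB : B.IsHermitian) :
    ((ρ * A * B).trace).re ≤
      Real.sqrt (((ρ * A * A).trace).re) * Real.sqrt (((ρ * B * B).trace).re) := by
  set a := ((ρ * B * B).trace).re with ha
  set c := ((ρ * A * A).trace).re with hc
  set r := ((ρ * A * B).trace).re with hr
  have hc0 : 0 ≤ c := traceRe_sq_nonneg hρ hA
  have ha0 : 0 ≤ a := traceRe_sq_nonneg hρ hB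
  have key : ∀ t : ℝ, 0 ≤ a * (t * t) + (2 * r) * t + c := by
    intro t
    have hBt : ((t : ℂ) • B).IsHermitian := by
      rw [Matrix.IsHermitian, Matrix.conjTranspose_smul, hB.eq]
      norm_num
    have hH : (A + (t : ℂ) • B).IsHermitian := hA.add hBt
    have h0 : 0 ≤ ((ρ * (A + (t:ℂ) • B) * (A + (t:ℂ) • B)).trace).re :=
      traceRe_sq_nonneg hρ hH
    have hexp : ρ * (A + (t:ℂ) • B) * (A + (t:ℂ) • B) =
        ρ * A * A + (t:ℂ) • (ρ * A * B) + (t:ℂ) • (ρ * B * A)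
          + ((t:ℂ) * (t:ℂ)) • (ρ * B * B) := by
      simp only [Matrix.mul_add, Matrix.add_mul, Matrix.mul_smul, Matrix.smul_mul, smul_smul,
        smul_add]
      abel
    have hsym : ((ρ * B * A).trace).re = r := traceRe_comm hρ.isHermitian hB hA
    rw [hexp] at h0
    simp only [Matrix.trace_add, Matrix.trace_smul, smul_eq_mul, Complex.add_re,
      Complex.mul_re, Complex.ofReal_re, Complex.ofReal_im, Complex.mul_im] at h0
    rw [hsym] at h0
    nlinarith [h0]
  have hd := discrim_le_zero key
  rw [discrim] at hd
  have hr2 : r ^ 2 ≤ c * a := by nlinarith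
  calc r ≤ |r| := le_abs_self r
    _ = Real.sqrt (r ^ 2) := (Real.sqrt_sq_eq_abs r).symm
    _ ≤ Real.sqrt (c * a) := Real.sqrt_le_sqrt hr2
    _ = Real.sqrt c * Real.sqrt a := Real.sqrt_mul hc0 a

theorem extended_convexity_qfi {d : ℕ} {ι : Type*} [Fintype ι]
    (ρs : ι → ℝ → Matrix (Fin d) (Fin d) ℂ) (lam : ι → ℝ → ℝ) (θ₀ : ℝ)
    (hpos : ∀ i θ, (ρs i θ).PosDef) (htr : ∀ i θ, (ρs i θ).trace = 1)
    (hherm : ∀ i θ, (ρs i θ).IsHermitian)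
    (hlampos : ∀ i θ, 0 < lam i θ) (hlamsum : ∀ θ, ∑ i, lam i θ = 1)
    (ρs' : ι → Matrix (Fin d) (Fin d) ℂ) (lam' : ι → ℝ)
    (ρ' : Matrix (Fin d) (Fin d) ℂ)
    (hρs' : ∀ i a b, HasDerivAt (fun θ => ρs i θ a b) (ρs' i a b) θ₀)
    (hlam' : ∀ i, HasDerivAt (fun θ => lam i θ) (lam' i) θ₀)
    (hρ' : ∀ a b, HasDerivAt (fun θ => (∑ i, lam i θ • ρs i θ) a b) (ρ' a b) θ₀)
    (L : Matrix (Fin d) (Fin d) ℂ) (Ls : ι → Matrix (Fin d) (Fin d) ℂ)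
    (hL : L.IsHermitian) (hLs : ∀ i, (Ls i).IsHermitian)
    (hSLD : ρ' = (2⁻¹ : ℂ) • ((∑ i, lam i θ₀ • ρs i θ₀) * L + L * (∑ i, lam i θ₀ • ρs i θ₀)))
    (hSLDi : ∀ i, ρs' i = (2⁻¹ : ℂ) • (ρs i θ₀ * Ls i + Ls i * ρs i θ₀)) :
    ((∑ i, lam i θ₀ • ρs i θ₀) * L * L).trace.re
      ≤ ∑ i, lam i θ₀ * ((ρs i θ₀ * Ls i * Ls i).trace.re)
        + ∑ i, (lam' i) ^ 2 / lam i θ₀ := by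
  classical
  set ρ : Matrix (Fin d) (Fin d) ℂ := ∑ i, lam i θ₀ • ρs i θ₀ with hρdef
  -- derivative of the mixture
  have hρ'eq : ρ' = ∑ i, ((lam' i : ℂ) • ρs i θ₀ + (lam i θ₀ : ℂ) • ρs' i) := by
    ext a b
    have hfun : (fun θ => (∑ i, lam i θ • ρs i θ) a b)
        = fun θ => ∑ i, (lam i θ : ℂ) * ρs i θ a b := by
      funext θ
      simp [Matrix.sum_apply, Complex.real_smul]
    have hder : HasDerivAt (fun θ => ∑ i, (lam i θ : ℂ) * ρs i θ a b)
        (∑ i, ((lam' i : ℂ) * ρs i θ₀ a b + (lam i θ₀ : ℂ) * ρs' i a b)) θ₀ :=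
      HasDerivAt.fun_sum fun i _ => ((hlam' i).ofReal_comp.mul (hρs' i a b))
    have := (hρ' a b).unique (hfun ▸ hder)
    rw [this]
    simp [Matrix.sum_apply]
  -- trace of each derivative vanishes
  have htrρs' : ∀ i, (ρs' i).trace = 0 := by
    intro i
    have h1 : HasDerivAt (fun θ => (ρs i θ).trace) ((ρs' i).trace) θ₀ := by
      simpa [Matrix.trace, Matrix.diag] using
        HasDerivAt.fun_sum (fun a (_ : a ∈ Finset.univ) => hρs' i a a)
    have h2 : HasDerivAt (fun θ => (ρs i θ).trace) 0 θ₀ := by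
      have he : (fun θ => (ρs i θ).trace) = fun _ => (1 : ℂ) := funext fun θ => htr i θ
      rw [he]; exact hasDerivAt_const _ _
    exact (h2.unique h1).symm
  -- tr(ρᵢ Lᵢ) = 0
  have htrρL : ∀ i, (ρs i θ₀ * Ls i).trace = 0 := by
    intro i
    have h := congrArg Matrix.trace (hSLDi i)
    rw [htrρs' i] at h
    rw [Matrix.trace_smul, Matrix.trace_add, Matrix.trace_mul_comm (Ls i) (ρs i θ₀)] at h
    have h2 : (0 : ℂ) = 2⁻¹ * (2 * (ρs i θ₀ * Ls i).trace) := by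
      rw [h]; simp [smul_eq_mul]; ring
    field_simp at h2
    linear_combination -h2
  -- abbreviations
  set c : ι → ℝ := fun i => lam' i / lam i θ₀ with hcdef
  set Lt : ι → Matrix (Fin d) (Fin d) ℂ := fun i => Ls i + (c i : ℂ) • 1 with hLtdef
  have hLtherm : ∀ i, (Lt i).IsHermitian := by
    intro i
    refine (hLs i).add ?_
    rw [Matrix.IsHermitian, Matrix.conjTranspose_smul, Matrix.conjTranspose_one]
    norm_num
  set x : ι → ℝ := fun i => ((ρs i θ₀ * Lt i * Lt i).trace).re with hxdef
  set y : ι → ℝ := fun i => ((ρs i θ₀ * L * L).trace).re with hydef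
  set S : ℝ := ((ρ * L * L).trace).re with hSdef
  have hpsd : ∀ i, (ρs i θ₀).PosSemidef := fun i => (hpos i θ₀).posSemidef
  have hx0 : ∀ i, 0 ≤ x i := fun i => traceRe_sq_nonneg (hpsd i) (hLtherm i)
  have hy0 : ∀ i, 0 ≤ y i := fun i => traceRe_sq_nonneg (hpsd i) hL
  -- S = ∑ λᵢ yᵢ
  have hSy : S = ∑ i, lam i θ₀ * y i := by
    rw [hSdef, hρdef]
    rw [Finset.sum_mul, Finset.sum_mul, Matrix.trace_sum, Complex.re_sum]
    congr 1
    funext i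
    rw [Matrix.smul_mul, Matrix.smul_mul, Matrix.trace_smul, Complex.real_smul,
      Complex.mul_re]
    simp [hydef]
  have hS0 : 0 ≤ S := by
    rw [hSy]
    exact Finset.sum_nonneg fun i _ => mul_nonneg (hlampos i θ₀).le (hy0 i)
  -- key identity : S = ∑ λᵢ Re tr(ρᵢ Ltᵢ L)
  have hkey : S = ∑ i, lam i θ₀ * ((ρs i θ₀ * Lt i * L).trace).re := by
    have e1 : (ρ' * L).trace = (ρ * L * L).trace := by
      rw [hSLD, Matrix.smul_mul, Matrix.add_mul, Matrix.trace_smul, Matrix.trace_add,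
        Matrix.trace_mul_cycle L ρ L, Matrix.trace_mul_cycle L L ρ, smul_eq_mul]
      ring
    have e2 : (ρ' * L).trace
        = ∑ i, ((lam' i : ℂ) * (ρs i θ₀ * L).trace + (lam i θ₀ : ℂ) * (ρs' i * L).trace) := by
      rw [hρ'eq, Finset.sum_mul, Matrix.trace_sum]
      refine Finset.sum_congr rfl fun i _ => ?_
      rw [Matrix.add_mul, Matrix.smul_mul, Matrix.smul_mul, Matrix.trace_add,
        Matrix.trace_smul, Matrix.trace_smul, smul_eq_mul, smul_eq_mul]
    have e3 : S = (∑ i, ((lam' i : ℂ) * (ρs i θ₀ * L).trace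
        + (lam i θ₀ : ℂ) * (ρs' i * L).trace)).re := by
      rw [hSdef, ← e1, e2]
    rw [e3, Complex.re_sum]
    refine Finset.sum_congr rfl fun i _ => ?_
    have hLt : ((ρs i θ₀ * Lt i * L).trace).re
        = ((ρs i θ₀ * Ls i * L).trace).re + c i * ((ρs i θ₀ * L).trace).re := by
      have hm : ρs i θ₀ * Lt i * L = ρs i θ₀ * Ls i * L + (c i : ℂ) • (ρs i θ₀ * L) := by
        simp only [hLtdef, Matrix.mul_add, Matrix.add_mul, Matrix.mul_smul,
          Matrix.smul_mul, Matrix.mul_one]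
      rw [hm, Matrix.trace_add, Matrix.trace_smul, smul_eq_mul, Complex.add_re,
        Complex.re_ofReal_mul]
    have hL'tr : ((ρs' i * L).trace).re = ((ρs i θ₀ * Ls i * L).trace).re := by
      rw [hSLDi i, Matrix.smul_mul, Matrix.add_mul, Matrix.trace_smul, Matrix.trace_add,
        Matrix.trace_mul_cycle (Ls i) (ρs i θ₀) L, Matrix.trace_mul_cycle L (Ls i) (ρs i θ₀)]
      have hsym := traceRe_comm (hherm i θ₀) hL (hLs i)
      rw [show (2⁻¹ : ℂ) = ((2⁻¹ : ℝ) : ℂ) by norm_num, smul_eq_mul,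
        Complex.re_ofReal_mul, Complex.add_re, hsym]
      ring
    rw [Complex.add_re, Complex.re_ofReal_mul, Complex.re_ofReal_mul, hL'tr, hLt, hcdef]
    have hl := (hlampos i θ₀).ne'
    field_simp
    ring
  -- xᵢ = Re tr(ρᵢ Lᵢ²) + cᵢ²
  have hxval : ∀ i, x i = ((ρs i θ₀ * Ls i * Ls i).trace).re + (c i) ^ 2 := by
    intro i
    have hm : ρs i θ₀ * Lt i * Lt i
        = ρs i θ₀ * Ls i * Ls i + (c i : ℂ) • (ρs i θ₀ * Ls i)
          + (c i : ℂ) • (ρs i θ₀ * Ls i) + ((c i : ℂ) * (c i : ℂ)) • (ρs i θ₀) := by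
      simp only [hLtdef, Matrix.mul_add, Matrix.add_mul, Matrix.mul_smul, Matrix.smul_mul,
        smul_smul, smul_add, Matrix.mul_one]
      abel
    show ((ρs i θ₀ * Lt i * Lt i).trace).re = _
    rw [hm]
    simp only [Matrix.trace_add, Matrix.trace_smul, htrρL i, htr i θ₀, smul_eq_mul,
      mul_zero, mul_one, add_zero, Complex.add_re, ← Complex.ofReal_mul, Complex.ofReal_re]
    ring
  -- Cauchy–Schwarz chain
  have hST : S ≤ ∑ i, lam i θ₀ * (Real.sqrt (x i) * Real.sqrt (y i)) := by
    rw [hkey]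
    exact Finset.sum_le_sum fun i _ => mul_le_mul_of_nonneg_left
      (traceRe_cauchy_schwarz (hpsd i) (hLtherm i) hL) (hlampos i θ₀).le
  set X : ℝ := ∑ i, lam i θ₀ * x i with hXdef
  have hX0 : 0 ≤ X :=
    Finset.sum_nonneg fun i _ => mul_nonneg (hlampos i θ₀).le (hx0 i)
  have hT2 : (∑ i, lam i θ₀ * (Real.sqrt (x i) * Real.sqrt (y i))) ^ 2 ≤ X * S := by
    have h1 : ∀ i, lam i θ₀ * (Real.sqrt (x i) * Real.sqrt (y i))
        = Real.sqrt (lam i θ₀ * x i) * Real.sqrt (lam i θ₀ * y i) := by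
      intro i
      rw [Real.sqrt_mul (hlampos i θ₀).le, Real.sqrt_mul (hlampos i θ₀).le]
      rw [show Real.sqrt (lam i θ₀) * Real.sqrt (x i)
          * (Real.sqrt (lam i θ₀) * Real.sqrt (y i))
          = (Real.sqrt (lam i θ₀) * Real.sqrt (lam i θ₀))
            * (Real.sqrt (x i) * Real.sqrt (y i)) by ring,
        Real.mul_self_sqrt (hlampos i θ₀).le]
    calc (∑ i, lam i θ₀ * (Real.sqrt (x i) * Real.sqrt (y i))) ^ 2
        = (∑ i, Real.sqrt (lam i θ₀ * x i) * Real.sqrt (lam i θ₀ * y i)) ^ 2 := by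
          congr 1; exact Finset.sum_congr rfl fun i _ => h1 i
      _ ≤ (∑ i, Real.sqrt (lam i θ₀ * x i) ^ 2) * (∑ i, Real.sqrt (lam i θ₀ * y i) ^ 2) :=
          Finset.sum_mul_sq_le_sq_mul_sq _ _ _
      _ = X * S := by
          rw [hXdef, hSy]
          congr 1 <;> exact Finset.sum_congr rfl fun i _ => Real.sq_sqrt
            (mul_nonneg (hlampos i θ₀).le (by first | exact hx0 i | exact hy0 i))
  -- X equals the RHS
  have hXrhs : X = ∑ i, lam i θ₀ * ((ρs i θ₀ * Ls i * Ls i).trace.re)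
      + ∑ i, (lam' i) ^ 2 / lam i θ₀ := by
    rw [hXdef, ← Finset.sum_add_distrib]
    refine Finset.sum_congr rfl fun i _ => ?_
    rw [hxval i, mul_add, hcdef]
    have hl := (hlampos i θ₀).ne'
    field_simp
  -- conclude
  rw [← hXrhs]
  rcases eq_or_lt_of_le hS0 with hS | hS
  · show S ≤ X
    rw [← hS]; exact hX0
  · have hSS : S * S ≤ X * S := by
      calc S * S ≤ (∑ i, lam i θ₀ * (Real.sqrt (x i) * Real.sqrt (y i)))
            * (∑ i, lam i θ₀ * (Real.sqrt (x i) * Real.sqrt (y i))) :=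
          mul_le_mul hST hST hS0 (le_trans hS0 hST)
        _ ≤ X * S := by nlinarith [hT2]
    exact le_of_mul_le_mul_right hSS hS
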